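/- If a word P of length 2n over a complementary alphabet has strictly fewer than C_n valid plane trees, then it has at most C_{n-1} valid plane trees. Equivalently, no word has k valid plane trees for any k with C_{n-1} < k < C_n. -/

import Mathlib

/-!
Model: a plane tree with n edges is encoded as a non-crossing perfect matching
on the 2n half-edge positions `Fin (2*n)`; a matched pair (i,j) with i < j is
the edge e(i,j). A word of length 2n is a function `Fin (2*n) → A`.
-/

lemma cat_step (m : ℕ) : (m+2) * catalan (m+1) = (2*(2*m+1)) * catalan m := by
  have h1 := succ_mul_catalan_eq_centralBinom m
  have h2 := succ_mul_catalan_eq_centralBinom (m+1)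
  have h3 := Nat.succ_mul_centralBinom_succ m
  have : (m+1) * ((m+2) * catalan (m+1)) = (m+1) * ((2*(2*m+1)) * catalan m) := by
    calc (m+1) * ((m+2) * catalan (m+1)) = (m+1) * ((m+1+1) * catalan (m+1)) := by ring_nf
    _ = (m+1) * Nat.centralBinom (m+1) := by rw [h2]
    _ = 2 * (2*m+1) * Nat.centralBinom m := h3
    _ = 2 * (2*m+1) * ((m+1) * catalan m) := by rw [h1]
    _ = (m+1) * ((2*(2*m+1)) * catalan m) := by ring
  exact Nat.eq_of_mul_eq_mul_left (by omega) this

lemma cat_ratio (a b : ℕ) (h : a ≤ b) :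
    catalan (a+1) * catalan b ≤ catalan a * catalan (b+1) := by
  have key : ((a+2)*(b+2)) * (catalan (a+1) * catalan b)
      ≤ ((a+2)*(b+2)) * (catalan a * catalan (b+1)) := by
    calc ((a+2)*(b+2)) * (catalan (a+1) * catalan b)
        = ((a+2)*catalan (a+1)) * ((b+2)*catalan b) := by ring
      _ = ((2*(2*a+1))*(b+2)) * (catalan a * catalan b) := by rw [cat_step]; ring
      _ ≤ ((a+2)*(2*(2*b+1))) * (catalan a * catalan b) := by
          apply Nat.mul_le_mul_right; nlinarith
      _ = ((a+2)*catalan a) * ((b+2)*catalan (b+1)) := by rw [cat_step]; ring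
      _ = ((a+2)*(b+2)) * (catalan a * catalan (b+1)) := by ring
  exact Nat.le_of_mul_le_mul_left key (by positivity)

lemma cat_mul_le : ∀ a b : ℕ, a ≤ b → catalan (a+1) * catalan (b+1) ≤ catalan (a+b+1) := by
  intro a
  induction a with
  | zero => intro b _; simp [catalan_one]
  | succ a ih =>
    intro b hab
    have h1 : catalan (a+1+1) * catalan (b+1) ≤ catalan (a+1) * catalan (b+1+1) :=
      cat_ratio (a+1) (b+1) (by omega)
    have h2 : catalan (a+1) * catalan (b+1+1) ≤ catalan (a+(b+1)+1) := ih (b+1) (by omega)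
    calc catalan (a+1+1) * catalan (b+1) ≤ catalan (a+(b+1)+1) := le_trans h1 h2
      _ = catalan (a+1+b+1) := by ring_nf

lemma cat_mul_le' (a b : ℕ) (ha : 1 ≤ a) (hb : 1 ≤ b) :
    catalan a * catalan b ≤ catalan (a+b-1) := by
  obtain ⟨a, rfl⟩ : ∃ a', a = a'+1 := ⟨a-1, by omega⟩
  obtain ⟨b, rfl⟩ : ∃ b', b = b'+1 := ⟨b-1, by omega⟩
  rcases le_total a b with h | h
  · have := cat_mul_le a b h
    calc catalan (a+1) * catalan (b+1) ≤ catalan (a+b+1) := this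
      _ = catalan (a+1+(b+1)-1) := by congr 1; omega
  · have := cat_mul_le b a h
    calc catalan (a+1) * catalan (b+1) = catalan (b+1) * catalan (a+1) := by ring
      _ ≤ catalan (b+a+1) := this
      _ = catalan (a+1+(b+1)-1) := by congr 1; omega

open Finset

/-- non-crossing perfect matching `M` on ground set `s ⊆ ℕ`. -/
def Good (s : Finset ℕ) (M : Finset (ℕ × ℕ)) : Prop :=
  (∀ p ∈ M, p.1 ∈ s ∧ p.2 ∈ s ∧ p.1 < p.2) ∧
  (∀ k ∈ s, ∃! p, p ∈ M ∧ (p.1 = k ∨ p.2 = k)) ∧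
  (∀ p ∈ M, ∀ q ∈ M, ¬(p.1 < q.1 ∧ q.1 < p.2 ∧ p.2 < q.2))

lemma good_card {s : Finset ℕ} {M : Finset (ℕ × ℕ)} (h : Good s M) :
    s.card = 2 * M.card := by
  obtain ⟨hb, hu, -⟩ := h
  have hs : s = M.biUnion (fun p => {p.1, p.2}) := by
    ext k
    simp only [mem_biUnion, mem_insert, mem_singleton]
    constructor
    · intro hk
      obtain ⟨p, ⟨hp, hk'⟩, -⟩ := hu k hk
      exact ⟨p, hp, by tauto⟩
    · rintro ⟨p, hp, (rfl | rfl)⟩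
      · exact (hb p hp).1
      · exact (hb p hp).2.1
  have hdisj : ∀ p ∈ M, ∀ q ∈ M, p ≠ q →
      Disjoint ({p.1, p.2} : Finset ℕ) {q.1, q.2} := by
    intro p hp q hq hne
    rw [Finset.disjoint_left]
    intro k hkp hkq
    simp only [mem_insert, mem_singleton] at hkp hkq
    have hks : k ∈ s := by
      rcases hkp with rfl | rfl
      · exact (hb p hp).1
      · exact (hb p hp).2.1
    obtain ⟨r, -, hr⟩ := hu k hks
    have h1 : p = r := hr p ⟨hp, by tauto⟩
    have h2 : q = r := hr q ⟨hq, by tauto⟩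
    exact hne (h1.trans h2.symm)
  have hcard2 : ∀ p ∈ M, ({p.1, p.2} : Finset ℕ).card = 2 := by
    intro p hp
    rw [Finset.card_insert_of_notMem (by simp [(hb p hp).2.2.ne]), Finset.card_singleton]
  rw [hs, Finset.card_biUnion hdisj, Finset.sum_congr rfl hcard2, Finset.sum_const,
    smul_eq_mul, Nat.mul_comm]

lemma good_finite (s : Finset ℕ) : {M : Finset (ℕ × ℕ) | Good s M}.Finite := by
  apply Set.Finite.subset (Finset.finite_toSet ((s ×ˢ s).powerset))
  intro M hM
  simp only [Finset.coe_powerset, Set.mem_preimage, Set.mem_powerset_iff,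
    Finset.coe_subset, Set.mem_setOf_eq] at *
  intro p hp
  simp only [Finset.mem_coe, Finset.mem_product]
  exact ⟨(hM.1 p hp).1, (hM.1 p hp).2.1⟩
lemma good_map {s : Finset ℕ} {M : Finset (ℕ × ℕ)} (G : ℕ → ℕ)
    (hG : ∀ i ∈ s, ∀ j ∈ s, i < j ↔ G i < G j) (h : Good s M) :
    Good (s.image G) (M.image (Prod.map G G)) := by
  obtain ⟨hb, hu, hnc⟩ := h
  have hinj : ∀ i ∈ s, ∀ j ∈ s, G i = G j → i = j := by
    intro i hi j hj hij
    by_contra hne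
    rcases Nat.lt_or_ge i j with h' | h'
    · exact absurd hij ((hG i hi j hj).mp h').ne
    · have : j < i := by omega
      exact absurd hij.symm ((hG j hj i hi).mp this).ne
  refine ⟨?_, ?_, ?_⟩
  · rintro p hp
    simp only [Finset.mem_image] at hp
    obtain ⟨q, hq, rfl⟩ := hp
    obtain ⟨h1, h2, h3⟩ := hb q hq
    exact ⟨Finset.mem_image_of_mem _ h1, Finset.mem_image_of_mem _ h2,
      (hG q.1 h1 q.2 h2).mp h3⟩
  · intro k hk
    simp only [Finset.mem_image] at hk
    obtain ⟨k0, hk0, rfl⟩ := hk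
    obtain ⟨p, ⟨hp, hpk⟩, hup⟩ := hu k0 hk0
    refine ⟨Prod.map G G p, ⟨Finset.mem_image_of_mem _ hp, by
      rcases hpk with h' | h'
      · left; simp [Prod.map, h']
      · right; simp [Prod.map, h']⟩, ?_⟩
    rintro q' ⟨hq', hq'k⟩
    simp only [Finset.mem_image] at hq'
    obtain ⟨q, hq, rfl⟩ := hq'
    have hqk : q.1 = k0 ∨ q.2 = k0 := by
      obtain ⟨hq1, hq2, -⟩ := hb q hq
      rcases hq'k with h' | h'
      · left; exact hinj q.1 hq1 k0 hk0 h'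
      · right; exact hinj q.2 hq2 k0 hk0 h'
    rw [hup q ⟨hq, hqk⟩]
  · rintro p hp q hq
    simp only [Finset.mem_image] at hp hq
    obtain ⟨p0, hp0, rfl⟩ := hp
    obtain ⟨q0, hq0, rfl⟩ := hq
    obtain ⟨hp1, hp2, -⟩ := hb p0 hp0
    obtain ⟨hq1, hq2, -⟩ := hb q0 hq0
    rintro ⟨c1, c2, c3⟩
    exact hnc p0 hp0 q0 hq0
      ⟨(hG p0.1 hp1 q0.1 hq1).mpr c1, (hG q0.1 hq1 p0.2 hp2).mpr c2,
       (hG p0.2 hp2 q0.2 hq2).mpr c3⟩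

/-- the number of good matchings depends only on the cardinality of the ground set. -/

lemma ncard_good_le_aux {s t : Finset ℕ} (G H : ℕ → ℕ)
    (himg : s.image G = t)
    (hG : ∀ i ∈ s, ∀ j ∈ s, i < j ↔ G i < G j)
    (hHG : ∀ i ∈ s, H (G i) = i) :
    {M : Finset (ℕ × ℕ) | Good s M}.ncard ≤ {M : Finset (ℕ × ℕ) | Good t M}.ncard := by
  refine Set.ncard_le_ncard_of_injOn (fun M => M.image (Prod.map G G)) ?_ ?_ (good_finite t)
  · intro M hM
    have := good_map G hG hM
    rwa [himg] at this
  · intro M1 h1 M2 h2 heq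
    simp only at heq
    have key : ∀ M : Finset (ℕ × ℕ), Good s M →
        (M.image (Prod.map G G)).image (Prod.map H H) = M := by
      intro M hM
      rw [Finset.image_image]
      have : ∀ p ∈ M, (Prod.map H H ∘ Prod.map G G) p = p := by
        intro p hp
        obtain ⟨h1, h2, -⟩ := hM.1 p hp
        simp only [Function.comp_apply, Prod.map_apply]
        exact Prod.ext (hHG p.1 h1) (hHG p.2 h2)
      calc M.image (Prod.map H H ∘ Prod.map G G) = M.image id := Finset.image_congr this
        _ = M := Finset.image_id
    rw [← key M1 h1, ← key M2 h2, heq]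


lemma ncard_good_eq_of_card_eq {s t : Finset ℕ} (h : s.card = t.card) :
    {M : Finset (ℕ × ℕ) | Good s M}.ncard = {M : Finset (ℕ × ℕ) | Good t M}.ncard := by
  set e := s.orderIsoOfFin rfl with he
  set f := t.orderIsoOfFin h.symm with hf
  set G : ℕ → ℕ := fun i => if hi : i ∈ s then (f (e.symm ⟨i, hi⟩) : ℕ) else 0 with hGdef
  set H : ℕ → ℕ := fun k => if hk : k ∈ t then (e (f.symm ⟨k, hk⟩) : ℕ) else 0 with hHdef
  have hGval : ∀ i (hi : i ∈ s), G i = (f (e.symm ⟨i, hi⟩) : ℕ) := by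
    intro i hi; simp [hGdef, dif_pos hi]
  have hHval : ∀ k (hk : k ∈ t), H k = (e (f.symm ⟨k, hk⟩) : ℕ) := by
    intro k hk; simp [hHdef, dif_pos hk]
  have hGmem : ∀ i ∈ s, G i ∈ t := by
    intro i hi; rw [hGval i hi]; exact (f (e.symm ⟨i, hi⟩)).2
  have hHmem : ∀ k ∈ t, H k ∈ s := by
    intro k hk; rw [hHval k hk]; exact (e (f.symm ⟨k, hk⟩)).2
  have hGmono : ∀ i ∈ s, ∀ j ∈ s, i < j ↔ G i < G j := by
    intro i hi j hj
    rw [hGval i hi, hGval j hj]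
    rw [Subtype.coe_lt_coe, f.lt_iff_lt, e.symm.lt_iff_lt, Subtype.mk_lt_mk]
  have hHmono : ∀ i ∈ t, ∀ j ∈ t, i < j ↔ H i < H j := by
    intro i hi j hj
    rw [hHval i hi, hHval j hj]
    rw [Subtype.coe_lt_coe, e.lt_iff_lt, f.symm.lt_iff_lt, Subtype.mk_lt_mk]
  have hHG : ∀ i ∈ s, H (G i) = i := by
    intro i hi
    rw [hHval (G i) (hGmem i hi)]
    have : (⟨G i, hGmem i hi⟩ : {x // x ∈ t}) = f (e.symm ⟨i, hi⟩) :=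
      Subtype.ext (hGval i hi)
    rw [this, f.symm_apply_apply, e.apply_symm_apply]
  have hGH : ∀ k ∈ t, G (H k) = k := by
    intro k hk
    rw [hGval (H k) (hHmem k hk)]
    have : (⟨H k, hHmem k hk⟩ : {x // x ∈ s}) = e (f.symm ⟨k, hk⟩) :=
      Subtype.ext (hHval k hk)
    rw [this, e.symm_apply_apply, f.apply_symm_apply]
  have himgG : s.image G = t := by
    apply Finset.eq_of_subset_of_card_le
    · intro k hk
      simp only [Finset.mem_image] at hk
      obtain ⟨i, hi, rfl⟩ := hk
      exact hGmem i hi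
    · rw [Finset.card_image_of_injOn, h]
      intro i hi j hj hij
      by_contra hne
      simp only [Finset.mem_coe] at hi hj
      rcases Nat.lt_or_ge i j with h' | h'
      · exact absurd hij ((hGmono i hi j hj).mp h').ne
      · exact absurd hij.symm ((hGmono j hj i hi).mp (by omega)).ne
  have himgH : t.image H = s := by
    apply Finset.eq_of_subset_of_card_le
    · intro k hk
      simp only [Finset.mem_image] at hk
      obtain ⟨i, hi, rfl⟩ := hk
      exact hHmem i hi
    · rw [Finset.card_image_of_injOn, h]
      intro i hi j hj hij
      by_contra hne
      simp only [Finset.mem_coe] at hi hj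
      rcases Nat.lt_or_ge i j with h' | h'
      · exact absurd hij ((hHmono i hi j hj).mp h').ne
      · exact absurd hij.symm ((hHmono j hj i hi).mp (by omega)).ne
  exact le_antisymm (ncard_good_le_aux G H himgG hGmono hHG)
    (ncard_good_le_aux H G himgH hHmono hGH)

lemma set_ncard_prod {α β : Type*} (A : Set α) (B : Set β) :
    (A ×ˢ B).ncard = A.ncard * B.ncard := by
  rw [← Nat.card_coe_set_eq, ← Nat.card_coe_set_eq, ← Nat.card_coe_set_eq,
    Nat.card_congr (Equiv.Set.prod A B), Nat.card_prod]

lemma good_unique {s : Finset ℕ} {M : Finset (ℕ × ℕ)} (h : Good s M) {p q : ℕ × ℕ}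
    (hp : p ∈ M) (hq : q ∈ M) {k : ℕ} (hpk : p.1 = k ∨ p.2 = k)
    (hqk : q.1 = k ∨ q.2 = k) : p = q := by
  have hks : k ∈ s := by
    rcases hpk with rfl | rfl
    · exact (h.1 p hp).1
    · exact (h.1 p hp).2.1
  obtain ⟨r, -, hr⟩ := h.2.1 k hks
  exact (hr p ⟨hp, hpk⟩).trans (hr q ⟨hq, hqk⟩).symm

lemma good_inner {s : Finset ℕ} {M : Finset (ℕ × ℕ)} (h : Good s M) {p : ℕ × ℕ}
    (hp : p ∈ M) :
    Good (s ∩ Finset.Ioo p.1 p.2) (M.filter fun q => p.1 < q.1 ∧ q.2 < p.2) := by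
  obtain ⟨hb, hu, hnc⟩ := h
  refine ⟨?_, ?_, ?_⟩
  · intro q hq
    rw [Finset.mem_filter] at hq
    obtain ⟨hqM, hq1, hq2⟩ := hq
    obtain ⟨m1, m2, m3⟩ := hb q hqM
    refine ⟨Finset.mem_inter.mpr ⟨m1, Finset.mem_Ioo.mpr ⟨hq1, by omega⟩⟩,
      Finset.mem_inter.mpr ⟨m2, Finset.mem_Ioo.mpr ⟨by omega, hq2⟩⟩, m3⟩
  · intro k hk
    rw [Finset.mem_inter, Finset.mem_Ioo] at hk
    obtain ⟨hks, hk1, hk2⟩ := hk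
    obtain ⟨q, ⟨hqM, hqk⟩, hun⟩ := hu k hks
    have hqfilt : p.1 < q.1 ∧ q.2 < p.2 := by
      have hqp : q ≠ p := by
        rintro rfl
        rcases hqk with h' | h' <;> omega
      rcases hqk with h' | h'
      · -- q.1 = k
        constructor
        · omega
        · have hnc1 := hnc p hp q hqM
          have hle : q.2 ≤ p.2 := by
            by_contra hcon
            exact hnc1 ⟨by omega, by omega, by omega⟩
          rcases Nat.lt_or_ge q.2 p.2 with h'' | h''
          · exact h''
          · have : q.2 = p.2 := by omega
            exact absurd (good_unique ⟨hb, hu, hnc⟩ hqM hp (Or.inr this) (Or.inr rfl)) hqp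
      · -- q.2 = k
        constructor
        · have hne : q.1 ≠ p.1 := by
            intro hcon
            exact hqp (good_unique ⟨hb, hu, hnc⟩ hqM hp (Or.inl hcon) (Or.inl rfl))
          rcases Nat.lt_or_ge q.1 p.1 with h'' | h''
          · exact absurd ⟨h'', by omega, by omega⟩ (hnc q hqM p hp)
          · omega
        · omega
    refine ⟨q, ⟨Finset.mem_filter.mpr ⟨hqM, hqfilt⟩, hqk⟩, ?_⟩
    rintro r ⟨hrM, hrk⟩
    rw [Finset.mem_filter] at hrM
    exact hun r ⟨hrM.1, hrk⟩
  · intro q hq r hr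
    rw [Finset.mem_filter] at hq hr
    exact hnc q hq.1 r hr.1

lemma good_parity {m : ℕ} {M : Finset (ℕ × ℕ)} (h : Good (Finset.range m) M)
    {p : ℕ × ℕ} (hp : p ∈ M) : (p.1 + p.2) % 2 = 1 := by
  obtain ⟨h1, h2, h3⟩ := h.1 p hp
  rw [Finset.mem_range] at h1 h2
  have hin := good_inner h hp
  have hss : Finset.range m ∩ Finset.Ioo p.1 p.2 = Finset.Ioo p.1 p.2 := by
    apply Finset.inter_eq_right.mpr
    intro x hx
    rw [Finset.mem_Ioo] at hx
    rw [Finset.mem_range]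
    omega
  rw [hss] at hin
  have hcard := good_card hin
  rw [Nat.card_Ioo] at hcard
  omega

lemma good_split {s : Finset ℕ} {M : Finset (ℕ × ℕ)} (h : Good s M) (T : Finset ℕ)
    (hT : T ⊆ s) (hcl : ∀ p ∈ M, (p.1 ∈ T ↔ p.2 ∈ T)) :
    Good T (M.filter fun p => p.1 ∈ T) ∧ Good (s \ T) (M.filter fun p => p.1 ∉ T) := by
  obtain ⟨hb, hu, hnc⟩ := h
  constructor
  · refine ⟨?_, ?_, ?_⟩
    · intro q hq
      rw [Finset.mem_filter] at hq
      exact ⟨hq.2, (hcl q hq.1).mp hq.2, (hb q hq.1).2.2⟩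
    · intro k hk
      obtain ⟨q, ⟨hqM, hqk⟩, hun⟩ := hu k (hT hk)
      have hq1T : q.1 ∈ T := by
        rcases hqk with rfl | rfl
        · exact hk
        · exact (hcl q hqM).mpr hk
      refine ⟨q, ⟨Finset.mem_filter.mpr ⟨hqM, hq1T⟩, hqk⟩, ?_⟩
      rintro r ⟨hrM, hrk⟩
      rw [Finset.mem_filter] at hrM
      exact hun r ⟨hrM.1, hrk⟩
    · intro q hq r hr
      rw [Finset.mem_filter] at hq hr
      exact hnc q hq.1 r hr.1
  · refine ⟨?_, ?_, ?_⟩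
    · intro q hq
      rw [Finset.mem_filter] at hq
      obtain ⟨m1, m2, m3⟩ := hb q hq.1
      refine ⟨Finset.mem_sdiff.mpr ⟨m1, hq.2⟩,
        Finset.mem_sdiff.mpr ⟨m2, fun hc => hq.2 ((hcl q hq.1).mpr hc)⟩, m3⟩
    · intro k hk
      rw [Finset.mem_sdiff] at hk
      obtain ⟨q, ⟨hqM, hqk⟩, hun⟩ := hu k hk.1
      have hq1T : q.1 ∉ T := by
        rcases hqk with rfl | rfl
        · exact hk.2
        · exact fun hc => hk.2 ((hcl q hqM).mp hc)
      refine ⟨q, ⟨Finset.mem_filter.mpr ⟨hqM, hq1T⟩, hqk⟩, ?_⟩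
      rintro r ⟨hrM, hrk⟩
      rw [Finset.mem_filter] at hrM
      exact hun r ⟨hrM.1, hrk⟩
    · intro q hq r hr
      rw [Finset.mem_filter] at hq hr
      exact hnc q hq.1 r hr.1

lemma ncard_le_split {s T : Finset ℕ} (hT : T ⊆ s) (V : Set (Finset (ℕ × ℕ)))
    (hV : ∀ M ∈ V, Good s M ∧ ∀ p ∈ M, (p.1 ∈ T ↔ p.2 ∈ T)) :
    V.ncard ≤ {M : Finset (ℕ × ℕ) | Good T M}.ncard *
      {M : Finset (ℕ × ℕ) | Good (s \ T) M}.ncard := by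
  rw [← set_ncard_prod]
  refine Set.ncard_le_ncard_of_injOn
    (fun M => (M.filter (fun p => p.1 ∈ T), M.filter (fun p => p.1 ∉ T))) ?_ ?_
    (Set.Finite.prod (good_finite T) (good_finite (s \ T)))
  · intro M hM
    obtain ⟨hg, hcl⟩ := hV M hM
    obtain ⟨h1, h2⟩ := good_split hg T hT hcl
    exact Set.mem_prod.mpr ⟨h1, h2⟩
  · intro M1 h1 M2 h2 heq
    simp only [Prod.mk.injEq] at heq
    have r1 := Finset.filter_union_filter_not_eq (fun p => p.1 ∈ T) M1
    have r2 := Finset.filter_union_filter_not_eq (fun p => p.1 ∈ T) M2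
    rw [← r1, ← r2, heq.1]
    congr 1
    convert heq.2 using 2

/-! ### Counting non-crossing matchings on `range (2n)` by binary trees -/

def sh (c : ℕ) : ℕ × ℕ → ℕ × ℕ := fun p => (p.1 + c, p.2 + c)

lemma sh_injective (c : ℕ) : Function.Injective (sh c) := by
  rintro ⟨a, b⟩ ⟨a', b'⟩ h
  simp only [sh, Prod.mk.injEq] at h ⊢
  omega

def mTree : Tree Unit → Finset (ℕ × ℕ)
  | BinaryTree.nil => ∅
  | BinaryTree.node _ L R => insert (0, 2 * L.numNodes + 1)
      ((mTree L).image (sh 1) ∪ (mTree R).image (sh (2 * L.numNodes + 2)))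

lemma good_shift {m : ℕ} {M : Finset (ℕ × ℕ)} (c : ℕ) (h : Good (Finset.range m) M) :
    Good (Finset.Ico c (m + c)) (M.image (sh c)) := by
  have := good_map (fun x => x + c) (fun i _ j _ => by omega) h
  have himg : (Finset.range m).image (fun x => x + c) = Finset.Ico c (m + c) := by
    ext x
    simp only [Finset.mem_image, Finset.mem_range, Finset.mem_Ico]
    constructor
    · rintro ⟨y, hy, rfl⟩; omega
    · intro hx; exact ⟨x - c, by omega, by omega⟩
  have heq : Prod.map (fun x => x + c) (fun x => x + c) = sh c := rfl
  rw [himg, heq] at this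
  exact this

lemma good_glue_abs {a b : ℕ} {s₁ s₂ s : Finset ℕ} {N₁ N₂ : Finset (ℕ × ℕ)}
    (h₁ : Good s₁ N₁) (h₂ : Good s₂ N₂) (hab : a < b)
    (hs₁ : ∀ x ∈ s₁, a < x ∧ x < b) (hs₂ : ∀ x ∈ s₂, b < x)
    (hs : s = insert a (insert b (s₁ ∪ s₂))) :
    Good s (insert (a, b) (N₁ ∪ N₂)) := by
  obtain ⟨hb₁, hu₁, hnc₁⟩ := h₁
  obtain ⟨hb₂, hu₂, hnc₂⟩ := h₂
  -- bounds of members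
  have hN₁ : ∀ p ∈ N₁, a < p.1 ∧ p.1 < p.2 ∧ p.2 < b := by
    intro p hp
    obtain ⟨m1, m2, m3⟩ := hb₁ p hp
    exact ⟨(hs₁ _ m1).1, m3, (hs₁ _ m2).2⟩
  have hN₂ : ∀ p ∈ N₂, b < p.1 ∧ p.1 < p.2 := by
    intro p hp
    obtain ⟨m1, m2, m3⟩ := hb₂ p hp
    exact ⟨hs₂ _ m1, m3⟩
  refine ⟨?_, ?_, ?_⟩
  · intro p hp
    rw [Finset.mem_insert, Finset.mem_union] at hp
    subst hs
    rcases hp with rfl | hp | hp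
    · exact ⟨Finset.mem_insert_self _ _,
        Finset.mem_insert_of_mem (Finset.mem_insert_self _ _), hab⟩
    · obtain ⟨m1, m2, m3⟩ := hb₁ p hp
      simp only [Finset.mem_insert, Finset.mem_union]
      exact ⟨Or.inr (Or.inr (Or.inl m1)), Or.inr (Or.inr (Or.inl m2)), m3⟩
    · obtain ⟨m1, m2, m3⟩ := hb₂ p hp
      simp only [Finset.mem_insert, Finset.mem_union]
      exact ⟨Or.inr (Or.inr (Or.inr m1)), Or.inr (Or.inr (Or.inr m2)), m3⟩
  · intro k hk
    rw [hs] at hk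
    simp only [Finset.mem_insert, Finset.mem_union] at hk
    rcases hk with hk | hk | hk | hk
    · -- k = a
      refine ⟨(a, b), ⟨Finset.mem_insert_self _ _, Or.inl hk.symm⟩, ?_⟩
      rintro q ⟨hq, hqk⟩
      rw [Finset.mem_insert, Finset.mem_union] at hq
      rcases hq with rfl | hq | hq
      · rfl
      · have := hN₁ q hq; rcases hqk with h' | h' <;> omega
      · have := hN₂ q hq; rcases hqk with h' | h' <;> omega
    · -- k = b
      refine ⟨(a, b), ⟨Finset.mem_insert_self _ _, Or.inr hk.symm⟩, ?_⟩
      rintro q ⟨hq, hqk⟩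
      rw [Finset.mem_insert, Finset.mem_union] at hq
      rcases hq with rfl | hq | hq
      · rfl
      · have := hN₁ q hq; rcases hqk with h' | h' <;> omega
      · have := hN₂ q hq; rcases hqk with h' | h' <;> omega
    · -- k ∈ s₁
      obtain ⟨q, ⟨hq, hqk⟩, hun⟩ := hu₁ k hk
      have hka := hs₁ k hk
      refine ⟨q, ⟨Finset.mem_insert_of_mem (Finset.mem_union_left _ hq), hqk⟩, ?_⟩
      rintro r ⟨hr, hrk⟩
      rw [Finset.mem_insert, Finset.mem_union] at hr
      rcases hr with rfl | hr | hr
      · simp only at hrk; omega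
      · exact hun r ⟨hr, hrk⟩
      · have := hN₂ r hr; rcases hrk with h' | h' <;> omega
    · -- k ∈ s₂
      obtain ⟨q, ⟨hq, hqk⟩, hun⟩ := hu₂ k hk
      have hka := hs₂ k hk
      refine ⟨q, ⟨Finset.mem_insert_of_mem (Finset.mem_union_right _ hq), hqk⟩, ?_⟩
      rintro r ⟨hr, hrk⟩
      rw [Finset.mem_insert, Finset.mem_union] at hr
      rcases hr with rfl | hr | hr
      · simp only at hrk; omega
      · have := hN₁ r hr; rcases hrk with h' | h' <;> omega
      · exact hun r ⟨hr, hrk⟩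
  · intro p hp q hq
    rw [Finset.mem_insert, Finset.mem_union] at hp hq
    rcases hp with rfl | hp | hp <;> rcases hq with rfl | hq | hq
    · simp only; omega
    · have := hN₁ q hq; simp only; omega
    · have := hN₂ q hq; simp only; omega
    · have := hN₁ p hp; simp only; omega
    · exact hnc₁ p hp q hq
    · have := hN₁ p hp; have := hN₂ q hq; omega
    · have := hN₂ p hp; simp only; omega
    · have := hN₂ p hp; have := hN₁ q hq; omega
    · exact hnc₂ p hp q hq

lemma good_glue {k l : ℕ} {M₁ M₂ : Finset (ℕ × ℕ)}
    (h₁ : Good (Finset.range (2 * k)) M₁) (h₂ : Good (Finset.range (2 * l)) M₂) :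
    Good (Finset.range (2 * k + 2 * l + 2))
      (insert (0, 2 * k + 1) ((M₁.image (sh 1)) ∪ (M₂.image (sh (2 * k + 2))))) := by
  have g₁ := good_shift 1 h₁
  have g₂ := good_shift (2 * k + 2) h₂
  refine good_glue_abs g₁ g₂ (by omega) ?_ ?_ ?_
  · intro x hx; rw [Finset.mem_Ico] at hx; omega
  · intro x hx; rw [Finset.mem_Ico] at hx; omega
  · ext x
    simp only [Finset.mem_range, Finset.mem_insert, Finset.mem_union, Finset.mem_Ico]
    omega

lemma mTree_good : ∀ t : Tree Unit, Good (Finset.range (2 * t.numNodes)) (mTree t) := by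
  intro t
  induction t with
  | nil =>
    refine ⟨?_, ?_, ?_⟩ <;> simp [mTree]
  | node v L R ihL ihR =>
    have := good_glue ihL ihR
    have harith : 2 * (Tree.node v L R).numNodes = 2 * L.numNodes + 2 * R.numNodes + 2 := by
      simp [Tree.numNodes]; ring
    rw [harith]
    exact this

def unsh (c : ℕ) : ℕ × ℕ → ℕ × ℕ := fun p => (p.1 - c, p.2 - c)

lemma good_range_decomp {m : ℕ} {M : Finset (ℕ × ℕ)} (hm : 0 < m)
    (h : Good (Finset.range m) M) :
    ∃ k l M₁ M₂, m = 2 * k + 2 * l + 2 ∧ Good (Finset.range (2 * k)) M₁ ∧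
      Good (Finset.range (2 * l)) M₂ ∧
      M = insert (0, 2 * k + 1) ((M₁.image (sh 1)) ∪ (M₂.image (sh (2 * k + 2)))) := by
  obtain ⟨hb, hu, hnc⟩ := h
  obtain ⟨p, ⟨hpM, hp0⟩, -⟩ := hu 0 (Finset.mem_range.mpr hm)
  obtain ⟨hp1, hp2, hplt⟩ := hb p hpM
  rw [Finset.mem_range] at hp1 hp2
  have hp10 : p.1 = 0 := by rcases hp0 with h' | h' <;> omega
  set j := p.2 with hj
  have hpj : p = (0, j) := by rw [hj, ← hp10]
  -- the inner part
  have hinner := good_inner ⟨hb, hu, hnc⟩ hpM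
  have hss : Finset.range m ∩ Finset.Ioo p.1 p.2 = Finset.Ioo 0 j := by
    ext x
    simp only [Finset.mem_inter, Finset.mem_range, Finset.mem_Ioo]
    omega
  rw [hss] at hinner
  set F₁ := M.filter (fun q => p.1 < q.1 ∧ q.2 < p.2) with hF₁
  have hcard1 := good_card hinner
  rw [Nat.card_Ioo] at hcard1
  set k := F₁.card with hk
  have hjodd : j = 2 * k + 1 := by
    have hj1 : 0 < j := by omega
    omega
  -- shift the inner part down by 1
  have hdown1 := good_map (fun x => x - 1) (fun i hi j' hj' => by
    rw [Finset.mem_Ioo] at hi hj'; omega) hinner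
  have himg1 : (Finset.Ioo 0 j).image (fun x => x - 1) = Finset.range (2 * k) := by
    ext x
    simp only [Finset.mem_image, Finset.mem_Ioo, Finset.mem_range]
    constructor
    · rintro ⟨y, hy, rfl⟩; omega
    · intro hx; exact ⟨x + 1, by omega, by omega⟩
  rw [himg1] at hdown1
  set M₁ := F₁.image (Prod.map (fun x => x - 1) (fun x => x - 1)) with hM₁
  -- the outer part
  set F₂ := M.filter (fun q => j < q.1) with hF₂
  have houter : Good (Finset.Ico (j + 1) m) F₂ := by
    refine ⟨?_, ?_, ?_⟩
    · intro q hq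
      rw [hF₂, Finset.mem_filter] at hq
      obtain ⟨m1, m2, m3⟩ := hb q hq.1
      rw [Finset.mem_range] at m1 m2
      exact ⟨Finset.mem_Ico.mpr ⟨by omega, by omega⟩, Finset.mem_Ico.mpr ⟨by omega, by omega⟩, m3⟩
    · intro x hx
      rw [Finset.mem_Ico] at hx
      obtain ⟨q, ⟨hqM, hqx⟩, hun⟩ := hu x (Finset.mem_range.mpr (by omega))
      have hqF : j < q.1 := by
        have hqp : q ≠ p := by
          rintro rfl
          rcases hqx with h' | h' <;> omega
        obtain ⟨n1, n2, n3⟩ := hb q hqM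
        rcases hqx with h' | h'
        · omega
        · -- q.2 = x > j ; show q.1 > j
          have hne1 : q.1 ≠ p.1 := fun hc =>
            hqp (good_unique ⟨hb, hu, hnc⟩ hqM hpM (Or.inl hc) (Or.inl rfl))
          have hne2 : q.1 ≠ j := fun hc =>
            hqp (good_unique ⟨hb, hu, hnc⟩ hqM hpM (Or.inl (by rw [hc])) (Or.inr rfl))
          rcases Nat.lt_or_ge j q.1 with h'' | h''
          · exact h''
          · exfalso
            exact hnc p hpM q hqM ⟨by omega, by omega, by omega⟩
      refine ⟨q, ⟨Finset.mem_filter.mpr ⟨hqM, hqF⟩, hqx⟩, ?_⟩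
      rintro r ⟨hr, hrx⟩
      rw [Finset.mem_filter] at hr
      exact hun r ⟨hr.1, hrx⟩
    · intro q hq r hr
      rw [Finset.mem_filter] at hq hr
      exact hnc q hq.1 r hr.1
  have hcard2 := good_card houter
  rw [Nat.card_Ico] at hcard2
  set l := F₂.card with hl
  have hdown2 := good_map (fun x => x - (j + 1)) (fun i hi j' hj' => by
    rw [Finset.mem_Ico] at hi hj'; omega) houter
  have himg2 : (Finset.Ico (j + 1) m).image (fun x => x - (j + 1)) = Finset.range (2 * l) := by
    ext x
    simp only [Finset.mem_image, Finset.mem_Ico, Finset.mem_range]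
    constructor
    · rintro ⟨y, hy, rfl⟩; omega
    · intro hx; exact ⟨x + (j + 1), by omega, by omega⟩
  rw [himg2] at hdown2
  set M₂ := F₂.image (Prod.map (fun x => x - (j + 1)) (fun x => x - (j + 1))) with hM₂
  refine ⟨k, l, M₁, M₂, by omega, hdown1, hdown2, ?_⟩
  -- reconstruction
  have hM₁up : M₁.image (sh 1) = F₁ := by
    rw [hM₁, Finset.image_image]
    have : ∀ q ∈ F₁, (sh 1 ∘ Prod.map (fun x => x - 1) (fun x => x - 1)) q = q := by
      intro q hq
      rw [hF₁, Finset.mem_filter] at hq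
      simp only [Function.comp_apply, Prod.map_fst, Prod.map_snd, sh]
      obtain ⟨g1, g2⟩ := hq.2
      have hlt := (hb q hq.1).2.2
      exact Prod.ext (by simp only []; omega) (by simp only []; omega)
    calc F₁.image _ = F₁.image id := Finset.image_congr this
      _ = F₁ := Finset.image_id
  have hM₂up : M₂.image (sh (2 * k + 2)) = F₂ := by
    rw [hM₂, Finset.image_image]
    have : ∀ q ∈ F₂, (sh (2 * k + 2) ∘ Prod.map (fun x => x - (j+1)) (fun x => x - (j+1))) q
        = q := by
      intro q hq
      rw [hF₂, Finset.mem_filter] at hq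
      obtain ⟨n1, n2, n3⟩ := hb q hq.1
      have := hq.2
      simp only [Function.comp_apply, Prod.map_fst, Prod.map_snd, sh]
      exact Prod.ext (by simp only []; omega) (by simp only []; omega)
    calc F₂.image _ = F₂.image id := Finset.image_congr this
      _ = F₂ := Finset.image_id
  rw [hM₁up, hM₂up]
  ext q
  simp only [Finset.mem_insert, Finset.mem_union, hF₁, hF₂, Finset.mem_filter]
  constructor
  · intro hqM
    by_cases hq0 : q.1 = 0 ∨ q.2 = 0
    · left
      have : q = p := good_unique ⟨hb, hu, hnc⟩ hqM hpM (by tauto) (by rw [← hp10]; tauto)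
      rw [this, hpj, hjodd]
    · push_neg at hq0
      obtain ⟨n1, n2, n3⟩ := hb q hqM
      have hqp : q ≠ p := by
        rintro rfl
        exact hq0.1 hp10
      have hne1 : q.1 ≠ j := fun hc =>
        hqp (good_unique ⟨hb, hu, hnc⟩ hqM hpM (Or.inl (by rw [hc])) (Or.inr rfl))
      have hne2 : q.2 ≠ j := fun hc =>
        hqp (good_unique ⟨hb, hu, hnc⟩ hqM hpM (Or.inr (by rw [hc])) (Or.inr rfl))
      rcases Nat.lt_or_ge q.1 j with h' | h'
      · right; left
        refine ⟨hqM, by omega, ?_⟩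
        have := hnc p hpM q hqM
        rw [hp10] at this
        have hq20 : ¬ (0 < q.1 ∧ q.1 < j ∧ j < q.2) := this
        omega
      · right; right
        exact ⟨hqM, by omega⟩
  · rintro (rfl | ⟨hq, -⟩ | ⟨hq, -⟩)
    · rw [← hjodd, ← hpj]; exact hpM
    · exact hq
    · exact hq

lemma mTree_surj : ∀ m : ℕ, ∀ M : Finset (ℕ × ℕ), Good (Finset.range m) M →
    ∃ t : Tree Unit, 2 * t.numNodes = m ∧ mTree t = M := by
  intro m
  induction m using Nat.strong_induction_on with
  | _ m ih =>
    intro M hM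
    rcases Nat.eq_zero_or_pos m with rfl | hm
    · refine ⟨Tree.nil, by simp, ?_⟩
      simp only [mTree]
      symm
      rw [Finset.eq_empty_iff_forall_notMem]
      intro p hp
      have := (hM.1 p hp).1
      simp at this
    · obtain ⟨k, l, M₁, M₂, hmeq, h₁, h₂, hMeq⟩ := good_range_decomp hm hM
      obtain ⟨t₁, ht₁, hmt₁⟩ := ih (2 * k) (by omega) M₁ h₁
      obtain ⟨t₂, ht₂, hmt₂⟩ := ih (2 * l) (by omega) M₂ h₂
      refine ⟨Tree.node () t₁ t₂, by simp [Tree.numNodes] at ht₁ ht₂ ⊢; omega, ?_⟩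
      rw [hMeq]
      simp only [mTree, hmt₁, hmt₂]
      have : 2 * t₁.numNodes = 2 * k := ht₁
      rw [ht₁]

lemma mTree_bound {t : Tree Unit} {q : ℕ × ℕ} (hq : q ∈ mTree t) :
    q.1 < q.2 ∧ q.2 < 2 * t.numNodes := by
  obtain ⟨m1, m2, m3⟩ := (mTree_good t).1 q hq
  rw [Finset.mem_range] at m1 m2
  exact ⟨m3, m2⟩

lemma mTree_filter_left (L R : Tree Unit) (k : ℕ) (hk : L.numNodes = k) :
    (insert (0, 2 * k + 1)
      ((mTree L).image (sh 1) ∪ (mTree R).image (sh (2 * k + 2)))).filter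
      (fun q => 0 < q.1 ∧ q.2 ≤ 2 * k) = (mTree L).image (sh 1) := by
  ext q
  rw [Finset.mem_filter, Finset.mem_insert, Finset.mem_union]
  constructor
  · rintro ⟨(rfl | hq | hq), hc⟩
    · simp only at hc; omega
    · exact hq
    · exfalso
      rw [Finset.mem_image] at hq
      obtain ⟨r, hr, rfl⟩ := hq
      have := (mTree_bound hr).1
      simp only [sh] at hc
      omega
  · intro hq
    refine ⟨Or.inr (Or.inl hq), ?_⟩
    rw [Finset.mem_image] at hq
    obtain ⟨r, hr, rfl⟩ := hq
    have := mTree_bound hr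
    simp only [sh]
    omega

lemma mTree_filter_right (L R : Tree Unit) (k : ℕ) (hk : L.numNodes = k) :
    (insert (0, 2 * k + 1)
      ((mTree L).image (sh 1) ∪ (mTree R).image (sh (2 * k + 2)))).filter
      (fun q => 2 * k + 1 < q.1) = (mTree R).image (sh (2 * k + 2)) := by
  ext q
  rw [Finset.mem_filter, Finset.mem_insert, Finset.mem_union]
  constructor
  · rintro ⟨(rfl | hq | hq), hc⟩
    · simp only at hc; omega
    · exfalso
      rw [Finset.mem_image] at hq
      obtain ⟨r, hr, rfl⟩ := hq
      have := (mTree_bound hr).2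
      have := (mTree_bound hr).1
      simp only [sh] at hc
      rw [hk] at *
      omega
    · exact hq
  · intro hq
    refine ⟨Or.inr (Or.inr hq), ?_⟩
    rw [Finset.mem_image] at hq
    obtain ⟨r, hr, rfl⟩ := hq
    simp only [sh]
    omega

lemma mTree_inj : ∀ t₁ t₂ : Tree Unit, mTree t₁ = mTree t₂ → t₁ = t₂ := by
  intro t₁
  induction t₁ with
  | nil =>
    intro t₂ h
    cases t₂ with
    | nil => rfl
    | node w L' R' =>
      exfalso
      simp only [mTree] at h
      exact (Finset.insert_ne_empty _ _) h.symm
  | node v L R ihL ihR =>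
    intro t₂ h
    cases t₂ with
    | nil =>
      exfalso
      simp only [mTree] at h
      exact (Finset.insert_ne_empty _ _) h
    | node w L' R' =>
      simp only [mTree] at h
      have hkk : L.numNodes = L'.numNodes := by
        have hmem : (0, 2 * L.numNodes + 1) ∈
            insert (0, 2 * L'.numNodes + 1)
              ((mTree L').image (sh 1) ∪ (mTree R').image (sh (2 * L'.numNodes + 2))) := by
          rw [← h]; exact Finset.mem_insert_self _ _
        rw [Finset.mem_insert, Finset.mem_union] at hmem
        rcases hmem with heq | hmem | hmem
        · simp only [Prod.mk.injEq] at heq; omega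
        · rw [Finset.mem_image] at hmem
          obtain ⟨r, hr, hre⟩ := hmem
          have : (sh 1 r).1 = 0 := by rw [hre]
          simp only [sh] at this
          omega
        · rw [Finset.mem_image] at hmem
          obtain ⟨r, hr, hre⟩ := hmem
          have : (sh (2 * L'.numNodes + 2) r).1 = 0 := by rw [hre]
          simp only [sh] at this
          omega
      set k := L.numNodes with hkdef
      have h' : insert (0, 2 * k + 1)
            ((mTree L).image (sh 1) ∪ (mTree R).image (sh (2 * k + 2)))
          = insert (0, 2 * k + 1)
            ((mTree L').image (sh 1) ∪ (mTree R').image (sh (2 * k + 2))) := by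
        rw [h, hkk]
      have hLeq : (mTree L).image (sh 1) = (mTree L').image (sh 1) := by
        rw [← mTree_filter_left L R k rfl, ← mTree_filter_left L' R' k hkk.symm, h']
      have hReq : (mTree R).image (sh (2 * k + 2)) = (mTree R').image (sh (2 * k + 2)) := by
        rw [← mTree_filter_right L R k rfl, ← mTree_filter_right L' R' k hkk.symm, h']
      have hL : L = L' := ihL _ (Finset.image_injective (sh_injective 1) hLeq)
      have hR : R = R' := ihR _ (Finset.image_injective (sh_injective _) hReq)
      rw [hL, hR]

theorem ncard_good_range (n : ℕ) :
    {M : Finset (ℕ × ℕ) | Good (Finset.range (2 * n)) M}.ncard = catalan n := by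
  rw [← BinaryTree.treesOfNumNodesEq_card_eq_catalan, ← Set.ncard_coe_finset]
  have himg : mTree '' ↑(BinaryTree.treesOfNumNodesEq n) = {M | Good (Finset.range (2 * n)) M} := by
    ext M
    simp only [Set.mem_image, Finset.mem_coe, BinaryTree.mem_treesOfNumNodesEq, Set.mem_setOf_eq]
    constructor
    · rintro ⟨t, ht, rfl⟩
      rw [← ht]
      exact mTree_good t
    · intro hM
      obtain ⟨t, ht, hmt⟩ := mTree_surj (2 * n) M hM
      exact ⟨t, by simp only [Tree.numNodes] at ht; omega, hmt⟩
  rw [← himg, Set.ncard_image_of_injOn (fun t _ u _ h => mTree_inj t u h)]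

theorem ncard_good_card (s : Finset ℕ) :
    {M : Finset (ℕ × ℕ) | Good s M}.ncard
      = if 2 ∣ s.card then catalan (s.card / 2) else 0 := by
  split_ifs with hdvd
  · obtain ⟨c, hc⟩ := hdvd
    have : s.card = (Finset.range (2 * (s.card / 2))).card := by
      rw [Finset.card_range]; omega
    rw [ncard_good_eq_of_card_eq this, ncard_good_range]
  · rw [Set.ncard_eq_zero (good_finite s)]
    rw [Set.eq_empty_iff_forall_notMem]
    intro M hM
    have := good_card hM
    exact hdvd ⟨M.card, this⟩

/-- `M` is a perfect matching on the positions `Fin (2*n)`. -/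
def IsMatchingF (n : ℕ) (M : Finset (Fin (2 * n) × Fin (2 * n))) : Prop :=
  (∀ p ∈ M, p.1 < p.2) ∧ (∀ k : Fin (2 * n), ∃! p, p ∈ M ∧ (p.1 = k ∨ p.2 = k))

/-- No two matched pairs cross. -/
def NonCrossingF (n : ℕ) (M : Finset (Fin (2 * n) × Fin (2 * n))) : Prop :=
  ∀ p ∈ M, ∀ q ∈ M, ¬ (p.1 < q.1 ∧ q.1 < p.2 ∧ p.2 < q.2)

/-- A plane tree on `n` edges: a non-crossing perfect matching. -/
def IsPlaneTreeF (n : ℕ) (M : Finset (Fin (2 * n) × Fin (2 * n))) : Prop :=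
  IsMatchingF n M ∧ NonCrossingF n M

/-- The plane tree `M` is valid for the word `P` (with complementation `comp`):
every matched pair consists of complementary letters. -/
def IsValidF {A : Type*} (n : ℕ) (P : Fin (2 * n) → A) (comp : A → A)
    (M : Finset (Fin (2 * n) × Fin (2 * n))) : Prop :=
  ∀ p ∈ M, P p.2 = comp (P p.1)

def phiF (n : ℕ) (M : Finset (Fin (2 * n) × Fin (2 * n))) : Finset (ℕ × ℕ) :=
  M.image (fun p => ((p.1 : ℕ), (p.2 : ℕ)))

lemma phiF_injective (n : ℕ) : Function.Injective (phiF n) := by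
  apply Finset.image_injective
  rintro ⟨a, b⟩ ⟨c, d⟩ h
  simp only [Prod.mk.injEq] at h
  exact Prod.ext (Fin.ext h.1) (Fin.ext h.2)

lemma transfer_iff {A : Type*} (n : ℕ) (P : Fin (2 * n) → A) (comp : A → A)
    (Q : ℕ → A) (hQ : ∀ i : Fin (2 * n), Q i.1 = P i)
    (M : Finset (Fin (2 * n) × Fin (2 * n))) :
    (IsPlaneTreeF n M ∧ IsValidF n P comp M) ↔
      (Good (Finset.range (2 * n)) (phiF n M) ∧
        ∀ p ∈ phiF n M, Q p.2 = comp (Q p.1)) := by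
  constructor
  · rintro ⟨⟨⟨hlt, hex⟩, hnc⟩, hval⟩
    refine ⟨⟨?_, ?_, ?_⟩, ?_⟩
    · intro p hp
      rw [phiF, Finset.mem_image] at hp
      obtain ⟨q, hq, rfl⟩ := hp
      exact ⟨Finset.mem_range.mpr q.1.isLt, Finset.mem_range.mpr q.2.isLt, hlt q hq⟩
    · intro k hk
      rw [Finset.mem_range] at hk
      obtain ⟨q, ⟨hq, hqk⟩, hun⟩ := hex ⟨k, hk⟩
      refine ⟨((q.1 : ℕ), (q.2 : ℕ)), ⟨Finset.mem_image_of_mem _ hq, ?_⟩, ?_⟩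
      · rcases hqk with h' | h'
        · left; rw [h']
        · right; rw [h']
      · rintro r ⟨hr, hrk⟩
        rw [phiF, Finset.mem_image] at hr
        obtain ⟨r₀, hr₀, rfl⟩ := hr
        have : r₀ = q := by
          apply hun
          refine ⟨hr₀, ?_⟩
          simp only at hrk
          rcases hrk with h' | h'
          · left; exact Fin.ext h'
          · right; exact Fin.ext h'
        rw [this]
    · intro p hp q hq
      rw [phiF, Finset.mem_image] at hp hq
      obtain ⟨p₀, hp₀, rfl⟩ := hp
      obtain ⟨q₀, hq₀, rfl⟩ := hq
      simp only
      intro hcon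
      exact hnc p₀ hp₀ q₀ hq₀ hcon
    · intro p hp
      rw [phiF, Finset.mem_image] at hp
      obtain ⟨q, hq, rfl⟩ := hp
      simp only
      rw [hQ q.1, hQ q.2]
      exact hval q hq
  · rintro ⟨⟨hb, hu, hnc⟩, hval⟩
    refine ⟨⟨⟨?_, ?_⟩, ?_⟩, ?_⟩
    · intro p hp
      have := hb _ (Finset.mem_image_of_mem (fun p => ((p.1 : ℕ), (p.2 : ℕ))) hp)
      exact this.2.2
    · intro k
      obtain ⟨p, ⟨hp, hpk⟩, hun⟩ := hu (k : ℕ) (Finset.mem_range.mpr k.isLt)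
      rw [phiF, Finset.mem_image] at hp
      obtain ⟨q, hq, rfl⟩ := hp
      refine ⟨q, ⟨hq, ?_⟩, ?_⟩
      · simp only at hpk
        rcases hpk with h' | h'
        · left; exact Fin.ext h'
        · right; exact Fin.ext h'
      · rintro r ⟨hr, hrk⟩
        have : ((r.1 : ℕ), (r.2 : ℕ)) = ((q.1 : ℕ), (q.2 : ℕ)) := by
          apply hun
          refine ⟨Finset.mem_image_of_mem _ hr, ?_⟩
          rcases hrk with rfl | rfl
          · left; rfl
          · right; rfl
        simp only [Prod.mk.injEq] at this
        exact Prod.ext (Fin.ext this.1) (Fin.ext this.2)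
    · intro p hp q hq hcon
      exact hnc _ (Finset.mem_image_of_mem _ hp) _ (Finset.mem_image_of_mem _ hq) hcon
    · intro p hp
      have := hval _ (Finset.mem_image_of_mem (fun p => ((p.1 : ℕ), (p.2 : ℕ))) hp)
      simp only at this
      rw [hQ p.1, hQ p.2] at this
      exact this

lemma transfer_ncard {A : Type*} (n : ℕ) (hn : 0 < n) (P : Fin (2 * n) → A) (comp : A → A)
    (Q : ℕ → A) (hQ : ∀ i : Fin (2 * n), Q i.1 = P i) :
    {M : Finset (Fin (2 * n) × Fin (2 * n)) |
        IsPlaneTreeF n M ∧ IsValidF n P comp M}.ncard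
      = {N : Finset (ℕ × ℕ) | Good (Finset.range (2 * n)) N ∧
          ∀ p ∈ N, Q p.2 = comp (Q p.1)}.ncard := by
  have hpos : 0 < 2 * n := by omega
  have himg : phiF n '' {M | IsPlaneTreeF n M ∧ IsValidF n P comp M}
      = {N : Finset (ℕ × ℕ) | Good (Finset.range (2 * n)) N ∧
          ∀ p ∈ N, Q p.2 = comp (Q p.1)} := by
    ext N
    simp only [Set.mem_image, Set.mem_setOf_eq]
    constructor
    · rintro ⟨M, hM, rfl⟩
      exact (transfer_iff n P comp Q hQ M).mp hM
    · intro hN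
      set M : Finset (Fin (2 * n) × Fin (2 * n)) :=
        N.image (fun p => ((⟨p.1 % (2 * n), Nat.mod_lt _ hpos⟩ : Fin (2 * n)),
          (⟨p.2 % (2 * n), Nat.mod_lt _ hpos⟩ : Fin (2 * n)))) with hMdef
      have hphiM : phiF n M = N := by
        rw [hMdef, phiF, Finset.image_image]
        have : ∀ p ∈ N, ((fun p => ((p.1 : ℕ), (p.2 : ℕ))) ∘
            (fun p : ℕ × ℕ => ((⟨p.1 % (2 * n), Nat.mod_lt _ hpos⟩ : Fin (2 * n)),
              (⟨p.2 % (2 * n), Nat.mod_lt _ hpos⟩ : Fin (2 * n))))) p = p := by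
          intro p hp
          obtain ⟨m1, m2, -⟩ := hN.1.1 p hp
          rw [Finset.mem_range] at m1 m2
          simp only [Function.comp_apply]
          exact Prod.ext (Nat.mod_eq_of_lt m1) (Nat.mod_eq_of_lt m2)
        calc N.image _ = N.image id := Finset.image_congr this
          _ = N := Finset.image_id
      refine ⟨M, ?_, hphiM⟩
      apply (transfer_iff n P comp Q hQ M).mpr
      rw [hphiM]
      exact hN
  rw [← himg, Set.ncard_image_of_injOn (Set.injOn_of_injective (phiF_injective n))]

/-- If a word of length `2n` has strictly fewer than `C_n` valid
plane trees, then it has at most `C_{n-1}` of them (so no word has `k` valid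
plane trees with `C_{n-1} < k < C_n`). -/
theorem valid_tree_count_gap {A : Type*}
    (comp : A → A) (hinv : Function.Involutive comp) (hff : ∀ a, comp a ≠ a)
    (n : ℕ) (hn : 1 ≤ n) (P : Fin (2 * n) → A)
    (hlt : Set.ncard {M : Finset (Fin (2 * n) × Fin (2 * n)) |
      IsPlaneTreeF n M ∧ IsValidF n P comp M} < catalan n) :
    Set.ncard {M : Finset (Fin (2 * n) × Fin (2 * n)) |
      IsPlaneTreeF n M ∧ IsValidF n P comp M} ≤ catalan (n - 1) := by
  classical
  have hpos : 0 < 2 * n := by omega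
  set Q : ℕ → A := fun i => P ⟨i % (2 * n), Nat.mod_lt _ hpos⟩ with hQdef
  have hQ : ∀ i : Fin (2 * n), Q i.1 = P i := by
    intro i
    have : (⟨(i : ℕ) % (2 * n), Nat.mod_lt _ hpos⟩ : Fin (2 * n)) = i :=
      Fin.ext (Nat.mod_eq_of_lt i.isLt)
    rw [hQdef]
    simp only
    rw [this]
  have htrans := transfer_ncard n hn P comp Q hQ
  rw [htrans] at hlt ⊢
  set s : Finset ℕ := Finset.range (2 * n) with hsdef
  set VNat : Set (Finset (ℕ × ℕ)) :=
    {N | Good s N ∧ ∀ p ∈ N, Q p.2 = comp (Q p.1)} with hVdef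
  set B := Q 0 with hBdef
  set T₂ : Finset ℕ :=
    s.filter (fun i => (i % 2 = 0 ∧ Q i = B) ∨ (i % 2 = 1 ∧ Q i = comp B)) with hTdef
  have hsub : T₂ ⊆ s := Finset.filter_subset _ _
  have hcl : ∀ N ∈ VNat, ∀ p ∈ N, (p.1 ∈ T₂ ↔ p.2 ∈ T₂) := by
    intro N hN p hp
    obtain ⟨hg, hv⟩ := hN
    have hpar := good_parity hg hp
    obtain ⟨m1, m2, m3⟩ := hg.1 p hp
    have hval := hv p hp
    rw [hTdef]
    simp only [Finset.mem_filter]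
    constructor
    · rintro ⟨-, (⟨he, hB⟩ | ⟨ho, hB⟩)⟩
      · refine ⟨m2, Or.inr ⟨by omega, by rw [hval, hB]⟩⟩
      · refine ⟨m2, Or.inl ⟨by omega, by rw [hval, hB, hinv B]⟩⟩
    · rintro ⟨-, (⟨he, hB⟩ | ⟨ho, hB⟩)⟩
      · refine ⟨m1, Or.inr ⟨by omega, ?_⟩⟩
        have : comp (Q p.1) = B := by rw [← hval, hB]
        rw [← this, hinv]
      · refine ⟨m1, Or.inl ⟨by omega, ?_⟩⟩
        have : comp (Q p.1) = comp B := by rw [← hval, hB]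
        exact hinv.injective this
  by_cases hT : T₂ = s
  · -- every good matching is valid : count = catalan n, contradiction
    exfalso
    have hall : VNat = {N : Finset (ℕ × ℕ) | Good s N} := by
      apply Set.eq_of_subset_of_subset
      · intro N hN; exact hN.1
      · intro N hN
        refine ⟨hN, ?_⟩
        intro p hp
        have hpar := good_parity hN hp
        obtain ⟨m1, m2, m3⟩ := hN.1 p hp
        have h1 : p.1 ∈ T₂ := by rw [hT]; exact m1
        have h2 : p.2 ∈ T₂ := by rw [hT]; exact m2
        rw [hTdef, Finset.mem_filter] at h1 h2
        rcases h1.2 with ⟨he1, hB1⟩ | ⟨ho1, hB1⟩ <;>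
          rcases h2.2 with ⟨he2, hB2⟩ | ⟨ho2, hB2⟩
        · omega
        · rw [hB2, hB1]
        · rw [hB2, hB1, hinv B]
        · omega
    rw [hall, ncard_good_card] at hlt
    have hc : s.card = 2 * n := Finset.card_range _
    rw [hc] at hlt
    simp only [Nat.dvd_mul_right, if_pos, Nat.mul_div_cancel_left _ (by norm_num : 0 < 2)] at hlt
    omega
  · -- T₂ is a proper nonempty "closed" subset
    have hbound := ncard_le_split hsub VNat (fun N hN => ⟨hN.1, hcl N hN⟩)
    rw [ncard_good_card, ncard_good_card] at hbound
    have hcards : (s \ T₂).card = 2 * n - T₂.card := by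
      rw [Finset.card_sdiff_of_subset hsub, hsdef, Finset.card_range]
    set a := T₂.card with hadef
    have ha_le : a ≤ 2 * n := by
      rw [hadef, ← Finset.card_range (2 * n)]
      exact Finset.card_le_card hsub
    have ha_lt : a < 2 * n := by
      rcases Nat.lt_or_ge a (2 * n) with h' | h'
      · exact h'
      · exfalso
        apply hT
        apply Finset.eq_of_subset_of_card_le hsub
        rw [hsdef, Finset.card_range]
        omega
    have ha_pos : 0 < a := by
      have h0 : (0 : ℕ) ∈ T₂ := by
        rw [hTdef, Finset.mem_filter]
        exact ⟨by rw [hsdef]; exact Finset.mem_range.mpr hpos, Or.inl ⟨rfl, rfl⟩⟩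
      exact Finset.card_pos.mpr ⟨0, h0⟩
    by_cases hdvd : 2 ∣ a
    · rw [if_pos hdvd, hcards, if_pos (by omega : 2 ∣ 2 * n - a)] at hbound
      have h1 : 1 ≤ a / 2 := by omega
      have h2 : 1 ≤ (2 * n - a) / 2 := by omega
      have := cat_mul_le' (a / 2) ((2 * n - a) / 2) h1 h2
      have harg : a / 2 + (2 * n - a) / 2 - 1 = n - 1 := by omega
      rw [harg] at this
      exact le_trans hbound this
    · rw [if_neg hdvd] at hbound
      simp only [Nat.zero_mul] at hbound
      omega
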